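/- For any binary linear [n,k,d] code C with d ≥ 4, there exists a parity-check matrix H of C whose stopping distance is 3, i.e., which admits a stopping set of size 3 that is not the support of a nonzero codeword. -/

import Mathlib

open Finset

variable {ι : Type*}

/-- Support of a binary word. -/
def supp [Fintype ι] (x : ι → ZMod 2) : Finset ι :=
  Finset.univ.filter (fun j => x j ≠ 0)

/-- Hamming weight of a binary word. -/
def wt [Fintype ι] (x : ι → ZMod 2) : ℕ := (supp x).card

/-- `S` is a stopping set for the matrix `H` if no row of the column-submatrix `H_S`
has weight exactly one. -/
def IsStoppingSet {ρ : Type*} (H : Matrix ρ ι (ZMod 2)) (S : Finset ι) : Prop :=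
  ∀ i : ρ, (S.filter (fun j => H i j = 1)).card ≠ 1

/-- The dual code of a binary linear code. -/
def dualCode [Fintype ι] (C : Submodule (ZMod 2) (ι → ZMod 2)) :
    Submodule (ZMod 2) (ι → ZMod 2) where
  carrier := {y | ∀ x ∈ C, ∑ j, y j * x j = 0}
  add_mem' := by
    intro a b ha hb x hx
    simp only [Set.mem_setOf_eq] at *
    simp [Pi.add_apply, add_mul, Finset.sum_add_distrib, ha x hx, hb x hx]
  zero_mem' := by intro x hx; simp
  smul_mem' := by
    intro c a ha x hx
    simp only [Set.mem_setOf_eq] at *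
    simp [Pi.smul_apply, smul_eq_mul, mul_assoc, ← Finset.mul_sum, ha x hx]

/-- The complete parity-check matrix of `C`: rows indexed by all dual codewords. -/
def Hstar [Fintype ι] (C : Submodule (ZMod 2) (ι → ZMod 2)) :
    Matrix (dualCode C) ι (ZMod 2) := fun y j => (y : ι → ZMod 2) j

/-- A code is minimum stopping if every stopping set of its complete parity-check
matrix is the support of a codeword. -/
def MinStopping [Fintype ι] (C : Submodule (ZMod 2) (ι → ZMod 2)) : Prop :=
  ∀ S : Finset ι, IsStoppingSet (Hstar C) S → ∃ c ∈ C, supp c = S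

/-- `H` is a parity-check matrix for `C` : the words checked by all rows of `H`
are exactly the codewords of `C`. -/
def IsPCM {ρ : Type*} [Fintype ι] (C : Submodule (ZMod 2) (ι → ZMod 2))
    (H : Matrix ρ ι (ZMod 2)) : Prop :=
  ∀ x : ι → ZMod 2, x ∈ C ↔ ∀ i : ρ, ∑ j, H i j * x j = 0

noncomputable def Bf (n : ℕ) : LinearMap.BilinForm (ZMod 2) (Fin n → ZMod 2) :=
  LinearMap.mk₂ (ZMod 2) (fun x y => ∑ j, x j * y j)
    (fun a b c => by simp [add_mul, Finset.sum_add_distrib])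
    (fun r a c => by simp [Finset.mul_sum, mul_assoc])
    (fun a b c => by simp [mul_add, Finset.sum_add_distrib])
    (fun r a c => by simp [Finset.mul_sum, mul_left_comm])

@[simp] lemma Bf_apply {n : ℕ} (x y : Fin n → ZMod 2) : Bf n x y = ∑ j, x j * y j := rfl

lemma Bf_refl {n : ℕ} : (Bf n).IsRefl := by
  intro x y h
  simp only [Bf_apply] at h ⊢
  simpa [mul_comm] using h

lemma Bf_nondeg {n : ℕ} : (Bf n).Nondegenerate := by
  refine ⟨?_, ?_⟩ <;> intro x hx <;> funext j <;> have := hx (Pi.single j 1) <;>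
  simpa [Pi.single_apply, mul_ite, ite_mul, Finset.sum_ite_eq', Finset.sum_ite_eq] using this

lemma mem_dualCode {n : ℕ} {C : Submodule (ZMod 2) (Fin n → ZMod 2)} {y : Fin n → ZMod 2} :
    y ∈ dualCode C ↔ ∀ x ∈ C, ∑ j, y j * x j = 0 := Iff.rfl

lemma dualCode_eq_orthogonal {n : ℕ} (C : Submodule (ZMod 2) (Fin n → ZMod 2)) :
    dualCode C = (Bf n).orthogonal C := by
  ext y
  simp only [mem_dualCode, LinearMap.BilinForm.mem_orthogonal_iff, LinearMap.BilinForm.IsOrtho,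
    Bf_apply]
  constructor <;> intro h x hx <;> · have := h x hx; simpa [mul_comm] using this

lemma double_dual {n : ℕ} (C : Submodule (ZMod 2) (Fin n → ZMod 2)) :
    dualCode (dualCode C) = C := by
  rw [dualCode_eq_orthogonal, dualCode_eq_orthogonal]
  exact LinearMap.BilinForm.orthogonal_orthogonal Bf_nondeg Bf_refl C

lemma finrank_dualCode {n : ℕ} (C : Submodule (ZMod 2) (Fin n → ZMod 2)) :
    Module.finrank (ZMod 2) (dualCode C) = n - Module.finrank (ZMod 2) C := by
  rw [dualCode_eq_orthogonal, LinearMap.BilinForm.finrank_orthogonal Bf_nondeg]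
  simp [Module.finrank_pi]

lemma mem_of_forall_dual {n : ℕ} {C : Submodule (ZMod 2) (Fin n → ZMod 2)} {x : Fin n → ZMod 2}
    (h : ∀ y ∈ dualCode C, ∑ j, y j * x j = 0) : x ∈ C := by
  rw [← double_dual C]
  rw [mem_dualCode]
  intro y hy
  have := h y hy
  simpa [mul_comm] using this

lemma sum_mul_single (a : Fin n) (v : Fin n → ZMod 2) :
    ∑ j, v j * (Pi.single a 1 : Fin n → ZMod 2) j = v a := by
  simp [Pi.single_apply, mul_ite, Finset.sum_ite_eq]

lemma sum_single_mul (a : Fin n) (v : Fin n → ZMod 2) :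
    ∑ j, (Pi.single a 1 : Fin n → ZMod 2) j * v j = v a := by
  simp [Pi.single_apply, ite_mul, Finset.sum_ite_eq]

lemma exists_w (C : Submodule (ZMod 2) (Fin n → ZMod 2)) (j0 j1 j2 : Fin n)
    (h01 : j0 ≠ j1) (h02 : j0 ≠ j2) (h12 : j1 ≠ j2)
    (hsm : ∀ x ∈ C, (∀ j, j ≠ j0 → j ≠ j1 → j ≠ j2 → x j = 0) → x = 0) :
    ∃ w ∈ dualCode C, w j0 = 1 ∧ w j1 = 1 ∧ w j2 = 1 := by
  classical
  set s0 : Fin n → ZMod 2 := Pi.single j0 1 with hs0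
  set s1 : Fin n → ZMod 2 := Pi.single j1 1 with hs1
  set s2 : Fin n → ZMod 2 := Pi.single j2 1 with hs2
  set v : Fin 3 → (Fin n → ZMod 2) := ![s0, s1, s2] with hv
  set V : Submodule (ZMod 2) (Fin n → ZMod 2) := Submodule.span (ZMod 2) (Set.range v) with hV
  set π : (Fin n → ZMod 2) →ₗ[ZMod 2] (Fin n → ZMod 2) :=
    (LinearMap.proj j0).smulRight s0 + (LinearMap.proj j1).smulRight s1 +
      (LinearMap.proj j2).smulRight s2 with hπ
  have hπ_apply : ∀ y, π y = y j0 • s0 + y j1 • s1 + y j2 • s2 := by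
    intro y; simp [hπ]
  have hπ_at : ∀ y : Fin n → ZMod 2, (π y) j0 = y j0 ∧ (π y) j1 = y j1 ∧ (π y) j2 = y j2 := by
    intro y
    refine ⟨?_, ?_, ?_⟩ <;> rw [hπ_apply] <;>
      simp [hs0, hs1, hs2, Pi.single_apply, h01, h02, h12, Ne.symm h01, Ne.symm h02, Ne.symm h12]
  set P : Submodule (ZMod 2) (Fin n → ZMod 2) := (dualCode C).map π with hP
  have hPV : P ≤ V := by
    rintro _ ⟨y, hy, rfl⟩
    rw [hπ_apply]
    refine Submodule.add_mem _ (Submodule.add_mem _ ?_ ?_) ?_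
    · exact Submodule.smul_mem _ _ (Submodule.subset_span ⟨0, rfl⟩)
    · exact Submodule.smul_mem _ _ (Submodule.subset_span ⟨1, rfl⟩)
    · exact Submodule.smul_mem _ _ (Submodule.subset_span ⟨2, rfl⟩)
  have hmemV : ∀ a ∈ V, ∃ p q r : ZMod 2, a = p • s0 + q • s1 + r • s2 := by
    intro a ha
    rw [hV, Submodule.mem_span_range_iff_exists_fun] at ha
    obtain ⟨c, hc⟩ := ha
    exact ⟨c 0, c 1, c 2, by rw [← hc]; simp [Fin.sum_univ_three, hv]⟩
  have heval : ∀ (p q r : ZMod 2) (x : Fin n → ZMod 2),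
      ∑ j, (p • s0 + q • s1 + r • s2) j * x j = p * x j0 + q * x j1 + r * x j2 := by
    intro p q r x
    simp only [Pi.add_apply, Pi.smul_apply, smul_eq_mul, add_mul, Finset.sum_add_distrib,
      mul_assoc, ← Finset.mul_sum, hs0, hs1, hs2, sum_single_mul]
  have hVC : ∀ a ∈ V, a ∈ C → a = 0 := by
    intro a ha haC
    refine hsm a haC ?_
    obtain ⟨p, q, r, rfl⟩ := hmemV a ha
    intro j hj0 hj1 hj2
    simp [hs0, hs1, hs2, Pi.single_apply, hj0, hj1, hj2]
  have hinf : dualCode P ⊓ V = ⊥ := by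
    rw [eq_bot_iff]
    rintro a ⟨haP, haV⟩
    obtain ⟨p, q, r, rfl⟩ := hmemV a haV
    have haC : p • s0 + q • s1 + r • s2 ∈ C := by
      apply mem_of_forall_dual
      intro y hy
      have h1 : π y ∈ P := ⟨y, hy, rfl⟩
      have h2 := mem_dualCode.mp haP (π y) h1
      rw [heval] at h2
      obtain ⟨e0, e1, e2⟩ := hπ_at y
      rw [e0, e1, e2, ← heval p q r y] at h2
      calc ∑ j, y j * (p • s0 + q • s1 + r • s2) j
          = ∑ j, (p • s0 + q • s1 + r • s2) j * y j := by
            exact Finset.sum_congr rfl fun j _ => mul_comm _ _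
        _ = 0 := h2
    rw [Submodule.mem_bot]
    exact hVC _ haV haC
  -- dimension count
  have hfinN : Module.finrank (ZMod 2) (Fin n → ZMod 2) = n := by
    simp [Module.finrank_pi]
  have li : LinearIndependent (ZMod 2) v := by
    rw [Fintype.linearIndependent_iff]
    intro g hg
    rw [Fin.sum_univ_three] at hg
    have h0 := congrFun hg j0
    have h1 := congrFun hg j1
    have h2 := congrFun hg j2
    simp [hv, hs0, hs1, hs2, Pi.single_apply, h01, h02, h12, Ne.symm h01, Ne.symm h02,
      Ne.symm h12] at h0 h1 h2
    intro t
    fin_cases t <;> assumption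
  have hfinV : Module.finrank (ZMod 2) V = 3 := by
    rw [hV]
    have := finrank_span_eq_card li
    simpa using this
  have hfin_inf := Submodule.finrank_sup_add_finrank_inf_eq (dualCode P) V
  rw [hinf] at hfin_inf
  have hsup_le : Module.finrank (ZMod 2) ((dualCode P) ⊔ V : Submodule (ZMod 2) (Fin n → ZMod 2)) ≤ n := by
    have := Submodule.finrank_le ((dualCode P) ⊔ V : Submodule (ZMod 2) (Fin n → ZMod 2))
    rwa [hfinN] at this
  have hdP := finrank_dualCode P
  have hPle : Module.finrank (ZMod 2) P ≤ n := by
    have := Submodule.finrank_le P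
    rwa [hfinN] at this
  have hbot : Module.finrank (ZMod 2) (⊥ : Submodule (ZMod 2) (Fin n → ZMod 2)) = 0 := by
    simp
  have hPeqV : P = V := by
    refine Submodule.eq_of_le_of_finrank_le hPV ?_
    omega
  have hmem : s0 + s1 + s2 ∈ P := by
    rw [hPeqV]
    exact Submodule.add_mem _ (Submodule.add_mem _ (Submodule.subset_span ⟨0, rfl⟩)
      (Submodule.subset_span ⟨1, rfl⟩)) (Submodule.subset_span ⟨2, rfl⟩)
  obtain ⟨w, hwD, hweq⟩ := hmem
  obtain ⟨e0, e1, e2⟩ := hπ_at w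
  refine ⟨w, hwD, ?_, ?_, ?_⟩
  · rw [← e0, hweq]
    simp [hs0, hs1, hs2, Pi.single_apply, h01, h02, h12, Ne.symm h01, Ne.symm h02, Ne.symm h12]
  · rw [← e1, hweq]
    simp [hs0, hs1, hs2, Pi.single_apply, h01, h02, h12, Ne.symm h01, Ne.symm h02, Ne.symm h12]
  · rw [← e2, hweq]
    simp [hs0, hs1, hs2, Pi.single_apply, h01, h02, h12, Ne.symm h01, Ne.symm h02, Ne.symm h12]

noncomputable instance dualFintype {n : ℕ} (C : Submodule (ZMod 2) (Fin n → ZMod 2)) :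
    Fintype (dualCode C) := Fintype.ofFinite _

def rowF {n : ℕ} (C : Submodule (ZMod 2) (Fin n → ZMod 2)) (S : Finset (Fin n))
    (w : Fin n → ZMod 2) (y : dualCode C) : Fin n → ZMod 2 :=
  if (S.filter (fun j => (y : Fin n → ZMod 2) j = 1)).card = 1
    then (y : Fin n → ZMod 2) + w else (y : Fin n → ZMod 2)

lemma zmod2_ne : ∀ b : ZMod 2, b ≠ 1 → b = 0 := by decide
lemma zmod2_add : ∀ b : ZMod 2, (b + 1 = 1 ↔ ¬ b = 1) := by decide
lemma zmod2_self : ∀ b : ZMod 2, b + b = 0 := by decide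

theorem aux_main {n d : ℕ} (C : Submodule (ZMod 2) (Fin n → ZMod 2))
    (hd : ∀ c ∈ C, c ≠ 0 → d ≤ wt c) (hd4 : 4 ≤ d)
    (S : Finset (Fin n)) (hcard3 : S.card = 3)
    (w : Fin n → ZMod 2) (hwD : w ∈ dualCode C) (hSw : ∀ j ∈ S, w j = 1) :
    ∃ (r : ℕ) (H : Matrix (Fin r) (Fin n) (ZMod 2)), IsPCM C H ∧
      sInf {i : ℕ | 0 < i ∧ ∃ S : Finset (Fin n), S.card = i ∧ IsStoppingSet H S} = 3 := by
  classical
  set e := Fintype.equivFin (dualCode C) with he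
  have hrowD : ∀ y, rowF C S w y ∈ dualCode C := by
    intro y
    unfold rowF
    split
    · exact Submodule.add_mem _ y.2 hwD
    · exact y.2
  have hrow_card : ∀ y : dualCode C, (S.filter (fun j => rowF C S w y j = 1)).card ≠ 1 := by
    intro y
    by_cases hb : (S.filter (fun j => (y : Fin n → ZMod 2) j = 1)).card = 1
    · have hfe : S.filter (fun j => rowF C S w y j = 1)
          = S \ S.filter (fun j => (y : Fin n → ZMod 2) j = 1) := by
        rw [← Finset.filter_not]
        apply Finset.filter_congr
        intro j hj
        unfold rowF
        rw [if_pos hb]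
        simp only [Pi.add_apply, hSw j hj]
        exact zmod2_add _
      rw [hfe, Finset.card_sdiff_of_subset (Finset.filter_subset _ _), hb, hcard3]
      norm_num
    · have hfe : S.filter (fun j => rowF C S w y j = 1)
          = S.filter (fun j => (y : Fin n → ZMod 2) j = 1) := by
        apply Finset.filter_congr
        intro j hj
        unfold rowF
        rw [if_neg hb]
      rw [hfe]
      exact hb
  have hkey : ∀ x : Fin n → ZMod 2, (∀ y : dualCode C, ∑ j, rowF C S w y j * x j = 0) → x ∈ C := by
    intro x hx
    have hwnot : ¬ (S.filter (fun j => w j = 1)).card = 1 := by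
      rw [Finset.filter_true_of_mem hSw, hcard3]
      norm_num
    have hw0' : ∑ j, w j * x j = 0 := by
      have h := hx ⟨w, hwD⟩
      unfold rowF at h
      rwa [if_neg hwnot] at h
    apply mem_of_forall_dual
    intro y hy
    by_cases hb : (S.filter (fun j => y j = 1)).card = 1
    · have h := hx ⟨y, hy⟩
      unfold rowF at h
      rw [if_pos hb] at h
      simp only [Pi.add_apply, add_mul, Finset.sum_add_distrib] at h
      rwa [hw0', add_zero] at h
    · have h := hx ⟨y, hy⟩
      unfold rowF at h
      rwa [if_neg hb] at h
  refine ⟨Fintype.card (dualCode C), fun i j => rowF C S w (e.symm i) j, ?_, ?_⟩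
  · intro x
    constructor
    · intro hxC i
      exact mem_dualCode.mp (hrowD (e.symm i)) x hxC
    · intro h
      apply hkey x
      intro y
      have := h (e y)
      simpa only [Equiv.symm_apply_apply] using this
  · have mem3 : 3 ∈ {i : ℕ | 0 < i ∧ ∃ S' : Finset (Fin n), S'.card = i ∧
        IsStoppingSet (fun i j => rowF C S w (e.symm i) j) S'} :=
      ⟨by norm_num, S, hcard3, fun i => hrow_card (e.symm i)⟩
    have hlow : ∀ m ∈ {i : ℕ | 0 < i ∧ ∃ S' : Finset (Fin n), S'.card = i ∧
        IsStoppingSet (fun i j => rowF C S w (e.symm i) j) S'}, 3 ≤ m := by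
      rintro m ⟨hm0, S', hScard, hstop⟩
      by_contra hlt
      push_neg at hlt
      interval_cases m
      · -- size 1
        obtain ⟨a, rfl⟩ := Finset.card_eq_one.mp hScard
        have hHa : ∀ y : dualCode C, rowF C S w y a = 0 := by
          intro y
          have hst := hstop (e y)
          simp only [Equiv.symm_apply_apply, Finset.filter_singleton] at hst
          by_cases h1 : rowF C S w y a = 1
          · rw [if_pos h1, Finset.card_singleton] at hst
            exact absurd rfl hst
          · exact zmod2_ne _ h1
        have hxC : (Pi.single a 1 : Fin n → ZMod 2) ∈ C := by
          apply hkey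
          intro y
          rw [sum_mul_single]
          exact hHa y
        have hnz : (Pi.single a 1 : Fin n → ZMod 2) ≠ 0 := by
          intro h
          have := congrFun h a
          simp at this
        have hwt : wt (Pi.single a 1 : Fin n → ZMod 2) = 1 := by
          have hs : supp (Pi.single a 1 : Fin n → ZMod 2) = {a} := by
            ext j
            simp [supp, Pi.single_apply]
          rw [wt, hs, Finset.card_singleton]
        have := hd _ hxC hnz
        omega
      · -- size 2
        obtain ⟨a, b, hab, rfl⟩ := Finset.card_eq_two.mp hScard
        have hHab : ∀ y : dualCode C, rowF C S w y a = rowF C S w y b := by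
          intro y
          have hst := hstop (e y)
          simp only [Equiv.symm_apply_apply] at hst
          by_cases h1 : rowF C S w y a = 1 <;> by_cases h2 : rowF C S w y b = 1
          · rw [h1, h2]
          · exfalso
            apply hst
            rw [Finset.filter_insert, if_pos h1, Finset.filter_singleton, if_neg h2]
            simp
          · exfalso
            apply hst
            rw [Finset.filter_insert, if_neg h1, Finset.filter_singleton, if_pos h2]
            simp
          · rw [zmod2_ne _ h1, zmod2_ne _ h2]
        have hxC : (Pi.single a 1 + Pi.single b 1 : Fin n → ZMod 2) ∈ C := by
          apply hkey
          intro y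
          have h : ∑ j, rowF C S w y j * (Pi.single a 1 + Pi.single b 1 : Fin n → ZMod 2) j
              = rowF C S w y a + rowF C S w y b := by
            simp only [Pi.add_apply, mul_add, Finset.sum_add_distrib, sum_mul_single]
          rw [h, hHab y, zmod2_self]
        have hnz : (Pi.single a 1 + Pi.single b 1 : Fin n → ZMod 2) ≠ 0 := by
          intro h
          have := congrFun h a
          simp [Pi.single_apply, hab] at this
        have hwt : wt (Pi.single a 1 + Pi.single b 1 : Fin n → ZMod 2) = 2 := by
          have hsupp : supp (Pi.single a 1 + Pi.single b 1 : Fin n → ZMod 2) = {a, b} := by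
            ext j
            simp only [supp, Finset.mem_filter, Finset.mem_univ, true_and, Pi.add_apply,
              Pi.single_apply, Finset.mem_insert, Finset.mem_singleton]
            by_cases hja : j = a
            · subst hja
              simp [hab]
            · by_cases hjb : j = b
              · subst hjb
                simp [hja]
              · simp [hja, hjb]
          rw [wt, hsupp, Finset.card_insert_of_notMem (by simp [hab]), Finset.card_singleton]
        have := hd _ hxC hnz
        omega
    exact le_antisymm (Nat.sInf_le mem3) (le_csInf ⟨3, mem3⟩ hlow)

/-- For any binary linear [n,k,d] code C with d ≥ 4, there exists a parity-check matrix H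
of C whose stopping distance is 3. -/
theorem stmt_7 {n k d : ℕ} (C : Submodule (ZMod 2) (Fin n → ZMod 2))
    (hk : Module.finrank (ZMod 2) C = k)
    (hd : ∀ c ∈ C, c ≠ 0 → d ≤ wt c)
    (hex : ∃ c ∈ C, c ≠ 0 ∧ wt c = d)
    (hd4 : 4 ≤ d) :
    ∃ (r : ℕ) (H : Matrix (Fin r) (Fin n) (ZMod 2)), IsPCM C H ∧
      sInf {i : ℕ | 0 < i ∧ ∃ S : Finset (Fin n), S.card = i ∧ IsStoppingSet H S} = 3 := by
  classical
  obtain ⟨c, hcC, hc0, hwtc⟩ := hex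
  have hn : 4 ≤ n := by
    have h1 : wt c ≤ n := by
      have := Finset.card_filter_le Finset.univ (fun j => c j ≠ 0)
      simpa [wt, supp] using this
    omega
  set j0 : Fin n := ⟨0, by omega⟩ with hj0
  set j1 : Fin n := ⟨1, by omega⟩ with hj1
  set j2 : Fin n := ⟨2, by omega⟩ with hj2
  have h01 : j0 ≠ j1 := Fin.ne_of_val_ne (by norm_num)
  have h02 : j0 ≠ j2 := Fin.ne_of_val_ne (by norm_num)
  have h12 : j1 ≠ j2 := Fin.ne_of_val_ne (by norm_num)
  have hsm : ∀ x ∈ C, (∀ j, j ≠ j0 → j ≠ j1 → j ≠ j2 → x j = 0) → x = 0 := by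
    intro x hxC hx
    by_contra hne
    have hd' := hd x hxC hne
    have hsub : supp x ⊆ {j0, j1, j2} := by
      intro j hj
      simp only [supp, Finset.mem_filter, Finset.mem_univ, true_and] at hj
      by_contra hmem
      simp only [Finset.mem_insert, Finset.mem_singleton, not_or] at hmem
      exact hj (hx j hmem.1 hmem.2.1 hmem.2.2)
    have hle : wt x ≤ 3 := by
      refine le_trans (Finset.card_le_card hsub) ?_
      refine le_trans (Finset.card_insert_le _ _) ?_
      refine le_trans (Nat.add_le_add_right (Finset.card_insert_le _ _) 1) ?_
      simp
    omega
  obtain ⟨w, hwD, hw0, hw1, hw2⟩ := exists_w C j0 j1 j2 h01 h02 h12 hsm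
  have hSw : ∀ j ∈ ({j0, j1, j2} : Finset (Fin n)), w j = 1 := by
    intro j hj
    simp only [Finset.mem_insert, Finset.mem_singleton] at hj
    rcases hj with rfl | rfl | rfl <;> assumption
  have hcard3 : ({j0, j1, j2} : Finset (Fin n)).card = 3 := by
    rw [Finset.card_insert_of_notMem (by simp [h01, h02]),
      Finset.card_insert_of_notMem (by simp [h12]), Finset.card_singleton]
  exact aux_main C hd hd4 {j0, j1, j2} hcard3 w hwD hSw
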